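/- (Lions' generalized Lax–Milgram) Let $(F,\|\cdot\|_F)$ be a real Hilbert space and $\Phi \subseteq F$ a subspace equipped with a pre-Hilbert norm $|||\cdot|||$. Let $E : F \times \Phi \to \mathbb{R}$ be a bilinear form such that: (i) there is $C_1 > 0$ with $\|\varphi\|_F \le C_1 |||\varphi|||$ for all $\varphi \in \Phi$; (ii) for each fixed $\varphi \in \Phi$, the map $u \mapsto E(u,\varphi)$ is continuous on $F$; (iii) there is $C_2 > 0$ with $E(\varphi,\varphi) \ge C_2 |||\varphi|||^2$ for all $\varphi \in \Phi$. Then for every linear functional $L : \Phi \to \mathbb{R}$ continuous with respect to $|||\cdot|||$, there exists $u \in F$ with $E(u,\varphi) = L(\varphi)$ for all $\varphi \in \Phi$. -/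

import Mathlib

open Set
open scoped RealInnerProductSpace

/-- Lions' generalized Lax–Milgram theorem: `F` a Hilbert space, `G` a
pre-Hilbert space continuously embedded in `F` via `ι`, `E` bilinear with
`E(·,φ)` continuous on `F` for each `φ` and coercive on the diagonal of the
embedding; then every `G`-continuous linear functional `L` is represented:
there is `u ∈ F` with `E(u,φ) = L(φ)` for all `φ`. -/
theorem stmt13 {F G : Type*}
    [NormedAddCommGroup F] [InnerProductSpace ℝ F] [CompleteSpace F]
    [NormedAddCommGroup G] [InnerProductSpace ℝ G]
    (ι : G →ₗ[ℝ] F) (E : F →ₗ[ℝ] G →ₗ[ℝ] ℝ) (L : G →ₗ[ℝ] ℝ)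
    (C₁ C₂ CL : ℝ) (hC₁ : 0 < C₁) (hC₂ : 0 < C₂)
    (hemb : ∀ φ : G, ‖ι φ‖ ≤ C₁ * ‖φ‖)
    (hcont : ∀ φ : G, Continuous fun u : F => E u φ)
    (hcoer : ∀ φ : G, E (ι φ) φ ≥ C₂ * ‖φ‖ ^ 2)
    (hL : ∀ φ : G, |L φ| ≤ CL * ‖φ‖) :
    ∃ u : F, ∀ φ : G, E u φ = L φ := by
  classical
  -- the continuous linear functional `E (·, φ)` on F
  let f : G → (F →L[ℝ] ℝ) := fun φ => ⟨E.flip φ, hcont φ⟩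
  have hf_apply : ∀ φ u, f φ u = E u φ := fun _ _ => rfl
  -- Riesz representation
  let T : G →ₗ[ℝ] F :=
    { toFun := fun φ => (InnerProductSpace.toDual ℝ F).symm (f φ)
      map_add' := by
        intro x y
        have h : f (x + y) = f x + f y := by
          ext u; simp [hf_apply]
        show (InnerProductSpace.toDual ℝ F).symm (f (x + y)) = _
        rw [h, map_add]
      map_smul' := by
        intro c x
        have h : f (c • x) = c • f x := by
          ext u; simp [hf_apply]
        show (InnerProductSpace.toDual ℝ F).symm (f (c • x)) = _
        rw [h, map_smul]
        rfl }
  have hT : ∀ (φ : G) (u : F), (inner ℝ (T φ) u : ℝ) = E u φ := by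
    intro φ u
    show (inner ℝ ((InnerProductSpace.toDual ℝ F).symm (f φ)) u : ℝ) = E u φ
    exact InnerProductSpace.toDual_symm_apply
  -- lower bound on ‖T φ‖
  have hTnorm : ∀ φ : G, ‖φ‖ ≤ C₁ / C₂ * ‖T φ‖ := by
    intro φ
    have h1 : C₂ * ‖φ‖ ^ 2 ≤ (inner ℝ (T φ) (ι φ) : ℝ) := by rw [hT]; exact hcoer φ
    have h2 : (inner ℝ (T φ) (ι φ) : ℝ) ≤ ‖T φ‖ * ‖ι φ‖ := real_inner_le_norm _ _
    have h3 : ‖ι φ‖ ≤ C₁ * ‖φ‖ := hemb φ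
    have hTpos : (0:ℝ) ≤ ‖T φ‖ := norm_nonneg _
    have key : C₂ * ‖φ‖ ^ 2 ≤ ‖T φ‖ * (C₁ * ‖φ‖) := by
      calc C₂ * ‖φ‖ ^ 2 ≤ ‖T φ‖ * ‖ι φ‖ := le_trans h1 h2
        _ ≤ ‖T φ‖ * (C₁ * ‖φ‖) := by
            exact mul_le_mul_of_nonneg_left h3 hTpos
    rcases eq_or_lt_of_le (norm_nonneg φ) with h0 | h0
    · rw [← h0]
      positivity
    · have : C₂ * ‖φ‖ ≤ C₁ * ‖T φ‖ := by nlinarith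
      rw [div_mul_eq_mul_div, le_div_iff₀ hC₂]
      nlinarith
  have hTinj : Function.Injective T := by
    intro x y hxy
    have : x - y = 0 := by
      have := hTnorm (x - y)
      rw [map_sub, hxy, sub_self, norm_zero, mul_zero] at this
      exact norm_le_zero_iff.mp this
    exact sub_eq_zero.mp this
  -- functional on range T
  let e : G ≃ₗ[ℝ] LinearMap.range T := LinearEquiv.ofInjective T hTinj
  let ℓ₀ : LinearMap.range T →ₗ[ℝ] ℝ := L.comp e.symm.toLinearMap
  have hcoe : ∀ x : LinearMap.range T, (x : F) = T (e.symm x) := by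
    intro x
    conv_lhs => rw [← e.apply_symm_apply x]
    exact (LinearEquiv.ofInjective_apply (h := hTinj) T _).symm
  have hbound : ∀ x : LinearMap.range T, ‖ℓ₀ x‖ ≤ (max CL 0 * (C₁ / C₂)) * ‖x‖ := by
    intro x
    have h1 : |L (e.symm x)| ≤ max CL 0 * ‖e.symm x‖ := by
      refine (hL _).trans ?_
      exact mul_le_mul_of_nonneg_right (le_max_left _ _) (norm_nonneg _)
    have h2 : ‖e.symm x‖ ≤ C₁ / C₂ * ‖(x : F)‖ := by
      rw [hcoe x]; exact hTnorm _
    have hx : ‖x‖ = ‖(x : F)‖ := rfl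
    calc ‖ℓ₀ x‖ = |L (e.symm x)| := rfl
      _ ≤ max CL 0 * ‖e.symm x‖ := h1
      _ ≤ max CL 0 * (C₁ / C₂ * ‖(x : F)‖) :=
          mul_le_mul_of_nonneg_left h2 (le_max_right _ _)
      _ = (max CL 0 * (C₁ / C₂)) * ‖x‖ := by rw [hx]; ring
  let ℓc : LinearMap.range T →L[ℝ] ℝ := LinearMap.mkContinuous ℓ₀ _ hbound
  obtain ⟨g, hg, -⟩ := exists_extension_norm_eq (LinearMap.range T) ℓc
  refine ⟨(InnerProductSpace.toDual ℝ F).symm g, fun φ => ?_⟩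
  have h1 : E ((InnerProductSpace.toDual ℝ F).symm g) φ
      = (inner ℝ (T φ) ((InnerProductSpace.toDual ℝ F).symm g) : ℝ) := (hT _ _).symm
  have h2 : (inner ℝ (T φ) ((InnerProductSpace.toDual ℝ F).symm g) : ℝ) = g (T φ) := by
    rw [real_inner_comm]
    exact InnerProductSpace.toDual_symm_apply
  have hmem : T φ ∈ LinearMap.range T := LinearMap.mem_range_self T φ
  have h3 : g (T φ) = ℓc ⟨T φ, hmem⟩ := hg ⟨T φ, hmem⟩
  have h4 : ℓc ⟨T φ, hmem⟩ = L φ := by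
    show L (e.symm ⟨T φ, hmem⟩) = L φ
    congr 1
    have : e φ = ⟨T φ, hmem⟩ := Subtype.ext (LinearEquiv.ofInjective_apply (h := hTinj) T φ)
    rw [← this, e.symm_apply_apply]
  rw [h1, h2, h3, h4]
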